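/- If R is a decomposable symmetric relation on distributions that is preserved by convex combinations (μ₁ R ν₁ and μ₂ R ν₂ imply (μ₁ ⊕_r μ₂) R (ν₁ ⊕_r ν₂)) and satisfies the state-based transfer condition (δ(E) R δ(F) and E →α μ' imply δ(F) →α ν' with μ' R ν'), then R is contained in strong probabilistic bisimilarity. -/

import Mathlib

open scoped BigOperators
open Classical

namespace PBB

structure Distr (X : Type) where
  f : X → ℝ
  nonneg : ∀ x, 0 ≤ f x
  fin : (Function.support f).Finite
  sum_one : ∑ᶠ x, f x = 1

namespace Distr

variable {X : Type}

noncomputable def dirac (E : X) : Distr X where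
  f := fun x => if x = E then 1 else 0
  nonneg := fun x => by by_cases h : x = E <;> simp [h]
  fin := Set.Finite.subset (Set.finite_singleton E) (by
    intro x hx
    simp only [Function.mem_support] at hx
    by_contra h
    simp only [Set.mem_singleton_iff] at h
    simp [h] at hx)
  sum_one := by
    rw [finsum_eq_single _ E (by intro x hx; simp [hx])]
    simp

noncomputable def mix (r : ℝ) (h0 : 0 ≤ r) (h1 : r ≤ 1) (μ ν : Distr X) : Distr X where
  f := fun x => r * μ.f x + (1 - r) * ν.f x
  nonneg := fun x =>
    add_nonneg (mul_nonneg h0 (μ.nonneg x)) (mul_nonneg (by linarith) (ν.nonneg x))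
  fin := Set.Finite.subset (μ.fin.union ν.fin) (by
    intro x hx
    simp only [Function.mem_support] at hx
    by_contra h
    simp only [Set.mem_union, Function.mem_support, not_or, not_not] at h
    simp [h.1, h.2] at hx)
  sum_one := by
    have hf : (Function.support fun x => r * μ.f x).Finite :=
      Set.Finite.subset μ.fin (by
        intro x hx
        simp only [Function.mem_support] at hx ⊢
        intro h; simp [h] at hx)
    have hg : (Function.support fun x => (1 - r) * ν.f x).Finite :=
      Set.Finite.subset ν.fin (by
        intro x hx
        simp only [Function.mem_support] at hx ⊢
        intro h; simp [h] at hx)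
    rw [finsum_add_distrib hf hg, ← mul_finsum _ _, ← mul_finsum _ _,
      μ.sum_one, ν.sum_one]
    ring

end Distr

def IsMix {X : Type} (r : ℝ) (μ ν ξ : Distr X) : Prop :=
  ∀ x, ξ.f x = r * μ.f x + (1 - r) * ν.f x

def IsCombo {X I : Type} [Fintype I] (p : I → ℝ) (μs : I → Distr X) (ξ : Distr X) : Prop :=
  (∀ i, 0 ≤ p i) ∧ (∑ i, p i = 1) ∧ ∀ x, ξ.f x = ∑ i, p i * (μs i).f x

/-! ### The probabilistic process calculus -/

mutual
/-- Non-deterministic processes: `E ::= 0 | α.P | E + E`. -/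
inductive PE (Act : Type) : Type where
  | zero : PE Act
  | pre : Act → PP Act → PE Act
  | plus : PE Act → PE Act → PE Act

/-- Probabilistic processes: `P ::= ∂(E) | P ⊕_r P` with `r ∈ (0,1)`. -/
inductive PP (Act : Type) : Type where
  | dirac : PE Act → PP Act
  | pchoice : PP Act → (r : ℝ) → 0 < r → r < 1 → PP Act → PP Act
end

variable {Act : Type}

/-- The distribution `⟦P⟧` denoted by a probabilistic process. -/
noncomputable def den : PP Act → Distr (PE Act)
  | .dirac E => Distr.dirac E
  | .pchoice P r h0 h1 Q => Distr.mix r h0.le h1.le (den P) (den Q)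

/-- The transition relation `E →α μ` on non-deterministic processes. -/
inductive pstep : PE Act → Act → Distr (PE Act) → Prop where
  | pre (α : Act) (P : PP Act) : pstep (.pre α P) α (den P)
  | left {E₁ E₂ : PE Act} {α : Act} {μ : Distr (PE Act)} :
      pstep E₁ α μ → pstep (.plus E₁ E₂) α μ
  | right {E₁ E₂ : PE Act} {α : Act} {μ : Distr (PE Act)} :
      pstep E₂ α μ → pstep (.plus E₁ E₂) α μ

/-- The (combined) transition relation `μ →α μ'` on distributions. -/
def dstep (μ : Distr (PE Act)) (α : Act) (μ' : Distr (PE Act)) : Prop :=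
  ∃ (I : Type) (_ : Fintype I) (p : I → ℝ) (Es : I → PE Act) (μs : I → Distr (PE Act)),
    IsCombo p (fun i => Distr.dirac (Es i)) μ ∧ IsCombo p μs μ' ∧
    ∀ i, pstep (Es i) α (μs i)

variable (τ : Act)

/-- The partial silent step `μ →(τ) μ'`. -/
def ptau (μ μ' : Distr (PE Act)) : Prop :=
  dstep μ τ μ' ∨
  ∃ (s : ℝ) (μ₁ μ₂ μ₁' : Distr (PE Act)), 0 ≤ s ∧ s ≤ 1 ∧
    IsMix s μ₁ μ₂ μ ∧ IsMix s μ₁' μ₂ μ' ∧ dstep μ₁ τ μ₁'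

/-- `μ ⟹ μ'`: the reflexive-transitive closure of `→(τ)`. -/
def wtau : Distr (PE Act) → Distr (PE Act) → Prop :=
  Relation.ReflTransGen (ptau τ)

/-- The optional step `μ →(α) μ'`. -/
def optStep (μ : Distr (PE Act)) (α : Act) (μ' : Distr (PE Act)) : Prop :=
  dstep μ α μ' ∨ (α = τ ∧ ptau τ μ μ')

/-- Weak decomposability of a relation on distributions. -/
def WeaklyDecomposable (R : Distr (PE Act) → Distr (PE Act) → Prop) : Prop :=
  ∀ (I : Type) (_ : Fintype I) (p : I → ℝ) (μs : I → Distr (PE Act))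
    (μ ν : Distr (PE Act)),
    R μ ν → IsCombo p μs μ →
    ∃ (ν' : Distr (PE Act)) (νs : I → Distr (PE Act)),
      wtau τ ν ν' ∧ R μ ν' ∧ IsCombo p νs ν' ∧ ∀ i, R (μs i) (νs i)

/-- Decomposability of a relation on distributions. -/
def Decomposable (R : Distr (PE Act) → Distr (PE Act) → Prop) : Prop :=
  ∀ (I : Type) (_ : Fintype I) (p : I → ℝ) (μs : I → Distr (PE Act))
    (μ ν : Distr (PE Act)),
    R μ ν → IsCombo p μs μ →
    ∃ νs : I → Distr (PE Act), IsCombo p νs ν ∧ ∀ i, R (μs i) (νs i)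

/-- Branching probabilistic bisimulation relations. -/
def IsBranchingBisim (R : Distr (PE Act) → Distr (PE Act) → Prop) : Prop :=
  Symmetric R ∧ WeaklyDecomposable τ R ∧
  ∀ μ ν α μ', R μ ν → dstep μ α μ' →
    ∃ ν' ν'', wtau τ ν ν' ∧ optStep τ ν' α ν'' ∧ R μ ν' ∧ R μ' ν''

/-- Branching probabilistic bisimilarity `≈_b`. -/
def bb (μ ν : Distr (PE Act)) : Prop :=
  ∃ R, IsBranchingBisim τ R ∧ R μ ν

/-- Strong probabilistic bisimulation relations. -/
def IsStrongBisim (R : Distr (PE Act) → Distr (PE Act) → Prop) : Prop :=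
  Symmetric R ∧ Decomposable R ∧
  ∀ μ ν α μ', R μ ν → dstep μ α μ' →
    ∃ ν', dstep ν α ν' ∧ R μ' ν'

/-- Strong probabilistic bisimilarity `∼`. -/
def sb (μ ν : Distr (PE Act)) : Prop :=
  ∃ R, IsStrongBisim R ∧ R μ ν

/-- Rooted branching probabilistic bisimulation relations. -/
def IsRootedBranchingBisim (R : Distr (PE Act) → Distr (PE Act) → Prop) : Prop :=
  Symmetric R ∧ Decomposable R ∧
  ∀ μ ν α μ', R μ ν → dstep μ α μ' →
    ∃ ν', dstep ν α ν' ∧ bb τ μ' ν'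

/-- Rooted branching probabilistic bisimilarity `≈_rb`. -/
def rbb (μ ν : Distr (PE Act)) : Prop :=
  ∃ R, IsRootedBranchingBisim τ R ∧ R μ ν

/-- `≈_b`-stability of a distribution. -/
def Stable (μ : Distr (PE Act)) : Prop :=
  ∀ μ', wtau τ μ μ' → bb τ μ μ' → μ' = μ

/-- A state is rigid iff it admits no inert `τ`-transition. -/
def Rigid (E : PE Act) : Prop :=
  ¬ ∃ μ, pstep E τ μ ∧ bb τ (Distr.dirac E) μ

/-- `E ⊑ P`: every transition of `E` is matched by an optional transition of `⟦P⟧`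
with branching probabilistically bisimilar target. -/
def sq (E : PE Act) (P : PP Act) : Prop :=
  ∀ α μ, pstep E α μ → ∃ ν, optStep τ (den P) α ν ∧ bb τ μ ν



/-! ### Auxiliary lemmas -/

theorem Distr.ext' {X : Type} {μ ν : Distr X} (h : ∀ x, μ.f x = ν.f x) : μ = ν := by
  cases μ; cases ν
  simp only [Distr.mk.injEq]
  funext x; exact h x

/-- The convex combination of finitely many distributions. -/
noncomputable def Distr.comboD {X I : Type} [Fintype I] (p : I → ℝ)
    (hp : ∀ i, 0 ≤ p i) (hs : ∑ i, p i = 1) (μs : I → Distr X) : Distr X where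
  f := fun x => ∑ i, p i * (μs i).f x
  nonneg := fun x => Finset.sum_nonneg fun i _ => mul_nonneg (hp i) ((μs i).nonneg x)
  fin := by
    have hU : (⋃ i, Function.support (μs i).f).Finite :=
      Set.finite_iUnion fun i => (μs i).fin
    refine hU.subset ?_
    intro x hx
    simp only [Function.mem_support] at hx
    by_contra h
    simp only [Set.mem_iUnion, Function.mem_support, not_exists, not_not] at h
    exact hx (Finset.sum_eq_zero fun i _ => by rw [h i, mul_zero])
  sum_one := by
    have hU : (⋃ i, Function.support (μs i).f).Finite :=
      Set.finite_iUnion fun i => (μs i).fin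
    have hsub : ∀ i, Function.support (μs i).f ⊆ (hU.toFinset : Set X) := by
      intro i x hx
      rw [Set.Finite.coe_toFinset]
      exact Set.mem_iUnion.2 ⟨i, hx⟩
    have hmain : Function.support (fun x => ∑ i, p i * (μs i).f x) ⊆ (hU.toFinset : Set X) := by
      intro x hx
      simp only [Function.mem_support] at hx
      rw [Set.Finite.coe_toFinset]
      by_contra h
      simp only [Set.mem_iUnion, Function.mem_support, not_exists, not_not] at h
      exact hx (Finset.sum_eq_zero fun i _ => by rw [h i, mul_zero])
    rw [finsum_eq_finset_sum_of_support_subset _ hmain, Finset.sum_comm]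
    have : ∀ i : I, ∑ x ∈ hU.toFinset, p i * (μs i).f x = p i := by
      intro i
      rw [← Finset.mul_sum, ← finsum_eq_finset_sum_of_support_subset _ (hsub i),
        (μs i).sum_one, mul_one]
    simp only [this, hs]

/-- If a convex combination of distributions is a Dirac distribution, then every
component with positive weight equals that Dirac distribution. -/
theorem combo_dirac {X I : Type} [Fintype I] {p : I → ℝ} {ρs : I → Distr X} {E : X}
    (hc : IsCombo p ρs (Distr.dirac E)) {i : I} (hi : p i ≠ 0) :
    ρs i = Distr.dirac E := by
  obtain ⟨hp, hs, hf⟩ := hc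
  have hzero : ∀ x, x ≠ E → (ρs i).f x = 0 := by
    intro x hx
    have h0 : ∑ j, p j * (ρs j).f x = 0 := by
      rw [← hf x]
      simp [Distr.dirac, hx]
    have := (Finset.sum_eq_zero_iff_of_nonneg
      (fun j _ => mul_nonneg (hp j) ((ρs j).nonneg x))).1 h0 i (Finset.mem_univ i)
    rcases mul_eq_zero.1 this with h | h
    · exact absurd h hi
    · exact h
  have hone : (ρs i).f E = 1 := by
    have := (ρs i).sum_one
    rwa [finsum_eq_single _ E (fun x hx => hzero x hx)] at this
  refine Distr.ext' fun x => ?_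
  by_cases hx : x = E
  · subst hx; simp [Distr.dirac, hone]
  · simp [Distr.dirac, hx, hzero x hx]

/-- Every distribution is a convex combination of Dirac distributions. -/
theorem dirac_combo {X : Type} (ξ : Distr X) :
    IsCombo (fun i : {x // x ∈ ξ.fin.toFinset} => ξ.f i.1)
      (fun i => Distr.dirac i.1) ξ := by
  refine ⟨fun i => ξ.nonneg i.1, ?_, ?_⟩
  · rw [Finset.sum_coe_sort ξ.fin.toFinset ξ.f, ← finsum_eq_sum ξ.f ξ.fin, ξ.sum_one]
  · intro x
    have : ∀ i : {x // x ∈ ξ.fin.toFinset},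
        ξ.f i.1 * (Distr.dirac i.1).f x = if x = i.1 then ξ.f i.1 else 0 := by
      intro i
      simp [Distr.dirac, mul_ite]
    simp only [this]
    rw [Finset.sum_coe_sort ξ.fin.toFinset (fun y => if x = y then ξ.f y else 0)]
    rw [Finset.sum_ite_eq ξ.fin.toFinset x ξ.f]
    by_cases hx : x ∈ ξ.fin.toFinset
    · simp [hx]
    · have : ξ.f x = 0 := by
        by_contra h
        exact hx (ξ.fin.mem_toFinset.2 h)
      simp [hx, this]

/-- A copy of a distribution as a trivial convex combination of itself. -/
theorem const_combo {X I : Type} [Fintype I] {p : I → ℝ}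
    (hp : ∀ i, 0 ≤ p i) (hs : ∑ i, p i = 1) (μ : Distr X) :
    IsCombo p (fun _ => μ) μ :=
  ⟨hp, hs, fun x => by rw [← Finset.sum_mul, hs, one_mul]⟩

section Conv

variable {Act : Type} {R : Distr (PE Act) → Distr (PE Act) → Prop}

/-- Binary convexity implies `Fin n`-indexed convexity. -/
theorem conv_fin
    (hconv : ∀ (r : ℝ), 0 ≤ r → r ≤ 1 → ∀ μ₁ μ₂ ν₁ ν₂ μ ν : Distr (PE Act),
      R μ₁ ν₁ → R μ₂ ν₂ → IsMix r μ₁ μ₂ μ → IsMix r ν₁ ν₂ ν → R μ ν) :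
    ∀ (n : ℕ) (p : Fin n → ℝ) (μs νs : Fin n → Distr (PE Act)) (μ ν : Distr (PE Act)),
      IsCombo p μs μ → IsCombo p νs ν → (∀ i, R (μs i) (νs i)) → R μ ν := by
  intro n
  induction n with
  | zero =>
    intro p μs νs μ ν hμ _ _
    exact absurd hμ.2.1 (by simp)
  | succ n ih =>
    intro p μs νs μ ν hμ hν hR
    obtain ⟨hp, hs, hf⟩ := hμ
    obtain ⟨-, -, hg⟩ := hν
    have hsucc : p 0 + ∑ i : Fin n, p i.succ = 1 := by
      rw [← hs, Fin.sum_univ_succ]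
    have hr0 : 0 ≤ p 0 := hp 0
    have hr1 : p 0 ≤ 1 := by
      have : 0 ≤ ∑ i : Fin n, p i.succ :=
        Finset.sum_nonneg fun i _ => hp i.succ
      linarith
    by_cases h1 : p 0 = 1
    · -- all other weights are zero
      have hrest : ∀ i : Fin n, p i.succ = 0 := by
        have h0 : ∑ i : Fin n, p i.succ = 0 := by linarith
        intro i
        exact (Finset.sum_eq_zero_iff_of_nonneg (fun j _ => hp j.succ)).1 h0 i
          (Finset.mem_univ i)
      have hμ0 : μ = μs 0 := Distr.ext' fun x => by
        rw [hf x, Fin.sum_univ_succ, h1, one_mul,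
          Finset.sum_eq_zero (fun i _ => by rw [hrest i, zero_mul]), add_zero]
      have hν0 : ν = νs 0 := Distr.ext' fun x => by
        rw [hg x, Fin.sum_univ_succ, h1, one_mul,
          Finset.sum_eq_zero (fun i _ => by rw [hrest i, zero_mul]), add_zero]
      rw [hμ0, hν0]; exact hR 0
    · have hlt : p 0 < 1 := lt_of_le_of_ne hr1 h1
      have hden : (0:ℝ) < 1 - p 0 := by linarith
      set q : Fin n → ℝ := fun i => p i.succ / (1 - p 0) with hq
      have hq0 : ∀ i, 0 ≤ q i := fun i => div_nonneg (hp i.succ) hden.le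
      have hqs : ∑ i, q i = 1 := by
        rw [hq, ← Finset.sum_div]
        field_simp
        linarith
      set μ₂ := Distr.comboD q hq0 hqs (fun i => μs i.succ) with hμ₂
      set ν₂ := Distr.comboD q hq0 hqs (fun i => νs i.succ) with hν₂
      have hRrest : R μ₂ ν₂ :=
        ih q (fun i => μs i.succ) (fun i => νs i.succ) μ₂ ν₂
          ⟨hq0, hqs, fun x => rfl⟩ ⟨hq0, hqs, fun x => rfl⟩ (fun i => hR i.succ)
      have hmixgen : ∀ (f : Fin (n+1) → ℝ) (x : Fin (n+1) → ℝ),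
          True := fun _ _ => trivial
      have key : ∀ (μs' : Fin (n+1) → Distr (PE Act)) (x : PE Act),
          p 0 * (μs' 0).f x + (1 - p 0) * ∑ i, q i * (μs' i.succ).f x
            = ∑ i, p i * (μs' i).f x := by
        intro μs' x
        rw [Fin.sum_univ_succ, Finset.mul_sum]
        congr 1
        refine Finset.sum_congr rfl fun i _ => ?_
        rw [hq, ← mul_assoc, mul_div_cancel₀ _ (ne_of_gt hden)]
      have hmixμ : IsMix (p 0) (μs 0) μ₂ μ := fun x => by
        rw [hf x, ← key μs x]; rfl
      have hmixν : IsMix (p 0) (νs 0) ν₂ ν := fun x => by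
        rw [hg x, ← key νs x]; rfl
      exact hconv (p 0) hr0 hr1 _ _ _ _ μ ν (hR 0) hRrest hmixμ hmixν

/-- Binary convexity implies convexity for arbitrary finite convex combinations. -/
theorem conv_combo
    (hconv : ∀ (r : ℝ), 0 ≤ r → r ≤ 1 → ∀ μ₁ μ₂ ν₁ ν₂ μ ν : Distr (PE Act),
      R μ₁ ν₁ → R μ₂ ν₂ → IsMix r μ₁ μ₂ μ → IsMix r ν₁ ν₂ ν → R μ ν)
    {I : Type} [Fintype I] {p : I → ℝ} {μs νs : I → Distr (PE Act)}
    {μ ν : Distr (PE Act)}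
    (hμ : IsCombo p μs μ) (hν : IsCombo p νs ν) (hR : ∀ i, R (μs i) (νs i)) :
    R μ ν := by
  obtain ⟨hp, hs, hf⟩ := hμ
  obtain ⟨-, -, hg⟩ := hν
  set e := Fintype.equivFin I with he
  refine conv_fin hconv (Fintype.card I) (fun i => p (e.symm i))
    (fun i => μs (e.symm i)) (fun i => νs (e.symm i)) μ ν
    ⟨fun i => hp _, ?_, fun x => ?_⟩ ⟨fun i => hp _, ?_, fun x => ?_⟩
    (fun i => hR _)
  · rw [Equiv.sum_comp e.symm p, hs]
  · rw [Equiv.sum_comp e.symm (fun i => p i * (μs i).f x), hf x]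
  · rw [Equiv.sum_comp e.symm p, hs]
  · rw [Equiv.sum_comp e.symm (fun i => p i * (νs i).f x), hg x]

end Conv

/-- Flattening: a convex combination of distribution transitions is a distribution
transition from the combined source to the combined target. -/
theorem dstep_flatten {Act I : Type} [Fintype I] {p : I → ℝ}
    {νs θs : I → Distr (PE Act)} {ν θ : Distr (PE Act)} {α : Act}
    (hν : IsCombo p νs ν) (hθ : IsCombo p θs θ) (hd : ∀ i, dstep (νs i) α (θs i)) :
    dstep ν α θ := by
  choose J instJ q Fs ξs h1 h2 h3 using hd
  letI : ∀ i, Fintype (J i) := instJ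
  refine ⟨(Σ i, J i), inferInstance, fun ij => p ij.1 * q ij.1 ij.2,
    fun ij => Fs ij.1 ij.2, fun ij => ξs ij.1 ij.2, ?_, ?_, fun ij => h3 ij.1 ij.2⟩
  · refine ⟨fun ij => mul_nonneg (hν.1 ij.1) ((h1 ij.1).1 ij.2), ?_, ?_⟩
    · rw [← Finset.univ_sigma_univ, Finset.sum_sigma]
      have : ∀ i, ∑ j, p i * q i j = p i := by
        intro i
        rw [← Finset.mul_sum, (h1 i).2.1, mul_one]
      simp only [this, hν.2.1]
    · intro x
      rw [hν.2.2 x, ← Finset.univ_sigma_univ, Finset.sum_sigma]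
      refine Finset.sum_congr rfl fun i _ => ?_
      rw [(h1 i).2.2 x, Finset.mul_sum]
      exact Finset.sum_congr rfl fun j _ => by ring
  · refine ⟨fun ij => mul_nonneg (hν.1 ij.1) ((h1 ij.1).1 ij.2), ?_, ?_⟩
    · rw [← Finset.univ_sigma_univ, Finset.sum_sigma]
      have : ∀ i, ∑ j, p i * q i j = p i := by
        intro i
        rw [← Finset.mul_sum, (h1 i).2.1, mul_one]
      simp only [this, hν.2.1]
    · intro x
      rw [hθ.2.2 x, ← Finset.univ_sigma_univ, Finset.sum_sigma]
      refine Finset.sum_congr rfl fun i _ => ?_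
      rw [(h2 i).2.2 x, Finset.mul_sum]
      exact Finset.sum_congr rfl fun j _ => by ring

/-- The single-state transfer condition extends to arbitrary distributions on the right. -/
theorem single_transfer {Act : Type} {R : Distr (PE Act) → Distr (PE Act) → Prop}
    (hsym : Symmetric R) (hdec : Decomposable R)
    (hconv : ∀ (r : ℝ), 0 ≤ r → r ≤ 1 → ∀ μ₁ μ₂ ν₁ ν₂ μ ν : Distr (PE Act),
      R μ₁ ν₁ → R μ₂ ν₂ → IsMix r μ₁ μ₂ μ → IsMix r ν₁ ν₂ ν → R μ ν)
    (htrans : ∀ (E F : PE Act) (α : Act) (μ' : Distr (PE Act)),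
      R (Distr.dirac E) (Distr.dirac F) → pstep E α μ' →
      ∃ ν', dstep (Distr.dirac F) α ν' ∧ R μ' ν')
    (E : PE Act) (ξ : Distr (PE Act)) (α : Act) (μ' : Distr (PE Act))
    (hR : R (Distr.dirac E) ξ) (hstep : pstep E α μ') :
    ∃ ν', dstep ξ α ν' ∧ R μ' ν' := by
  have hcombo := dirac_combo ξ
  obtain ⟨ρs, hρc, hρ⟩ := hdec _ inferInstance _ _ ξ (Distr.dirac E) (hsym hR) hcombo
  have hRd : ∀ i : {x // x ∈ ξ.fin.toFinset}, R (Distr.dirac E) (Distr.dirac i.1) := by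
    intro i
    have hpi : ξ.f i.1 ≠ 0 := by
      have := ξ.fin.mem_toFinset.1 i.2
      exact this
    have := hρ i
    rw [combo_dirac hρc hpi] at this
    exact hsym this
  choose θs hθd hθR using fun i => htrans E i.1 α μ' (hRd i) hstep
  have hp := hcombo.1
  have hs := hcombo.2.1
  refine ⟨Distr.comboD _ hp hs θs, ?_, ?_⟩
  · exact dstep_flatten hcombo ⟨hp, hs, fun x => rfl⟩ hθd
  · exact conv_combo hconv (const_combo hp hs μ') ⟨hp, hs, fun x => rfl⟩ hθR


/-- A decomposable symmetric relation preserved by convex combinations satisfying the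
state-based transfer condition is contained in strong probabilistic bisimilarity. -/
theorem statement17 {Act : Type} (R : Distr (PE Act) → Distr (PE Act) → Prop)
    (hsym : Symmetric R) (hdec : Decomposable R)
    (hconv : ∀ (r : ℝ), 0 ≤ r → r ≤ 1 → ∀ μ₁ μ₂ ν₁ ν₂ μ ν : Distr (PE Act),
      R μ₁ ν₁ → R μ₂ ν₂ → IsMix r μ₁ μ₂ μ → IsMix r ν₁ ν₂ ν → R μ ν)
    (htrans : ∀ (E F : PE Act) (α : Act) (μ' : Distr (PE Act)),
      R (Distr.dirac E) (Distr.dirac F) → pstep E α μ' →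
      ∃ ν', dstep (Distr.dirac F) α ν' ∧ R μ' ν') :
    ∀ μ ν, R μ ν → sb μ ν := by
  intro μ ν hR
  refine ⟨R, ⟨hsym, hdec, ?_⟩, hR⟩
  intro μ ν α μ' hμν hstep
  obtain ⟨I, instI, p, Es, μs, hcμ, hcμ', hps⟩ := hstep
  obtain ⟨νs, hcν, hRs⟩ := hdec I instI p (fun i => Distr.dirac (Es i)) μ ν hμν hcμ
  choose θs hθd hθR using fun i =>
    single_transfer hsym hdec hconv htrans (Es i) (νs i) α (μs i) (hRs i) (hps i)
  refine ⟨Distr.comboD p hcν.1 hcν.2.1 θs,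
    dstep_flatten hcν ⟨hcν.1, hcν.2.1, fun x => rfl⟩ hθd, ?_⟩
  exact conv_combo hconv hcμ' ⟨hcν.1, hcν.2.1, fun x => rfl⟩ hθR

end PBB
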